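/- Let f : ℝ → ℝ be continuous on [0,1] and let p* ∈ [0,1] be its unique global maximizer over [0,1], i.e. f(p) < f(p*) for every p ∈ [0,1] with p ≠ p*. Assume f is differentiable on an open interval containing p*, that f'(p*) = 0, and that f' is differentiable at p* with second derivative f''(p*) < 0. Then there exist constants M2 > 0 and M3 > 0 such that for all p ∈ [0,1], M2·(p* − p)² ≤ f(p*) − f(p) ≤ M3·(p* − p)². -/

import Mathlib

set_option maxHeartbeats 1000000 in
/-- Proposition 1: quadratic growth envelope at a smooth, locally concave
global maximizer. -/
theorem quadratic_envelope_at_unique_max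
    (f : ℝ → ℝ) (pstar : ℝ) (f2 : ℝ)
    (hcont : ContinuousOn f (Set.Icc 0 1))
    (hpstar : pstar ∈ Set.Icc (0:ℝ) 1)
    (hmax : ∀ p ∈ Set.Icc (0:ℝ) 1, p ≠ pstar → f p < f pstar)
    (hdiff : ∃ a b : ℝ, pstar ∈ Set.Ioo a b ∧ ∀ x ∈ Set.Ioo a b, DifferentiableAt ℝ f x)
    (hderiv0 : deriv f pstar = 0)
    (hderiv2 : HasDerivAt (deriv f) f2 pstar)
    (hneg : f2 < 0) :
    ∃ M2 M3 : ℝ, 0 < M2 ∧ 0 < M3 ∧ ∀ p ∈ Set.Icc (0:ℝ) 1,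
      M2 * (pstar - p)^2 ≤ f pstar - f p ∧ f pstar - f p ≤ M3 * (pstar - p)^2 := by
  classical
  obtain ⟨a, b, hab, hfd⟩ := hdiff
  set g := deriv f with hg
  have hε : (0:ℝ) < -f2/4 := by linarith
  set ε : ℝ := -f2/4 with hεdef
  set c₁ : ℝ := f2 - ε with hc₁
  set c₂ : ℝ := f2 + ε with hc₂
  have hc₂neg : c₂ < 0 := by rw [hc₂, hεdef]; linarith
  have hc₁lt : c₁ < c₂ := by rw [hc₁, hc₂]; linarith
  have hslope : Filter.Tendsto (slope g pstar) (nhdsWithin pstar {pstar}ᶜ) (nhds f2) :=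
    hasDerivAt_iff_tendsto_slope.mp hderiv2
  have E2 : ∀ᶠ x in nhdsWithin pstar {pstar}ᶜ, slope g pstar x ∈ Set.Ioo c₁ c₂ :=
    hslope.eventually (Ioo_mem_nhds (by rw [hc₁]; linarith) (by rw [hc₂]; linarith))
  have E1 : ∀ᶠ x in nhdsWithin pstar {pstar}ᶜ, x ∈ Set.Ioo a b :=
    Filter.Eventually.filter_mono nhdsWithin_le_nhds (isOpen_Ioo.eventually_mem hab)
  have E := E1.and E2
  rw [Filter.eventually_iff, Metric.mem_nhdsWithin_iff] at E
  obtain ⟨δ, hδ, hE⟩ := E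
  have hball : ∀ x, |x - pstar| < δ → x ∈ Set.Ioo a b := by
    intro x hx
    by_cases hxp : x = pstar
    · exact hxp ▸ hab
    · exact (hE ⟨by rwa [Metric.mem_ball, Real.dist_eq], hxp⟩).1
  have hballd : ∀ x, |x - pstar| < δ → DifferentiableAt ℝ f x := fun x hx => hfd x (hball x hx)
  have hslope' : ∀ x, |x - pstar| < δ → x ≠ pstar →
      c₁ < g x / (x - pstar) ∧ g x / (x - pstar) < c₂ := by
    intro x hx hxp
    have h := (hE ⟨by rwa [Metric.mem_ball, Real.dist_eq], hxp⟩).2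
    rw [slope_def_field] at h
    have h0 : g pstar = 0 := hderiv0
    rw [h0, sub_zero] at h
    exact ⟨h.1, h.2⟩
  -- sign-specific slope bounds
  have hslopePos : ∀ x, |x - pstar| < δ → pstar < x →
      c₁ * (x - pstar) < g x ∧ g x < c₂ * (x - pstar) := by
    intro x hx hgt
    have hxs : (0:ℝ) < x - pstar := by linarith
    obtain ⟨h1, h2⟩ := hslope' x hx (by intro h; rw [h] at hgt; exact lt_irrefl _ hgt)
    exact ⟨by have := (lt_div_iff₀ hxs).mp h1; linarith,
           by have := (div_lt_iff₀ hxs).mp h2; linarith⟩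
  have hslopeNeg : ∀ x, |x - pstar| < δ → x < pstar →
      c₂ * (x - pstar) < g x ∧ g x < c₁ * (x - pstar) := by
    intro x hx hlt
    have hxs : x - pstar < 0 := by linarith
    obtain ⟨h1, h2⟩ := hslope' x hx (ne_of_lt hlt)
    exact ⟨by have := (div_lt_iff_of_neg hxs).mp h2; linarith,
           by have := (lt_div_iff_of_neg hxs).mp h1; linarith⟩
  -- derivative of the comparison functions
  have hφd : ∀ (c : ℝ) (x : ℝ), DifferentiableAt ℝ f x →
      HasDerivAt (fun y => f y - c/2 * (y - pstar)^2) (g x - c * (x - pstar)) x := by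
    intro c x hx
    have h1 : HasDerivAt (fun y : ℝ => (y - pstar)^2) (2 * (x - pstar)) x := by
      have := ((hasDerivAt_id x).sub_const pstar).fun_pow 2
      simpa using this
    have h2 : HasDerivAt (fun y : ℝ => c/2 * (y - pstar)^2) (c/2 * (2 * (x - pstar))) x :=
      h1.const_mul (c/2)
    have h3 := (hx.hasDerivAt).fun_sub h2
    rw [show g x - c * (x - pstar) = deriv f x - c / 2 * (2 * (x - pstar)) by ring]
    exact h3
  have hcontφ : ∀ (c : ℝ) (s : Set ℝ), (∀ x ∈ s, DifferentiableAt ℝ f x) →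
      ContinuousOn (fun y => f y - c/2 * (y - pstar)^2) s := by
    intro c s hs
    exact ContinuousOn.sub (fun x hx => (hs x hx).continuousAt.continuousWithinAt)
      (Continuous.continuousOn
        (continuous_const.mul ((continuous_id.sub continuous_const).pow 2)))
  -- the near bounds
  have hnear : ∀ p, |p - pstar| < δ →
      -c₂/2 * (pstar - p)^2 ≤ f pstar - f p ∧ f pstar - f p ≤ -c₁/2 * (pstar - p)^2 := by
    intro p hp
    by_cases hpp : p = pstar
    · subst hpp; simp
    have habs := abs_lt.mp hp
    rcases lt_or_gt_of_ne hpp with hlt | hgt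
    · -- p < pstar : work on [p, pstar]
      have hsub : ∀ x ∈ Set.Icc p pstar, |x - pstar| < δ := by
        intro x hx
        rw [abs_lt]
        exact ⟨by linarith [hx.1, habs.1], by linarith [hx.2, hδ]⟩
      have hd : ∀ x ∈ Set.Icc p pstar, DifferentiableAt ℝ f x := fun x hx => hballd x (hsub x hx)
      constructor
      · -- lower: ψ (with c₂) strictly mono on [p, pstar]
        have hmono : StrictMonoOn (fun y => f y - c₂/2 * (y - pstar)^2) (Set.Icc p pstar) := by
          apply strictMonoOn_of_deriv_pos (convex_Icc _ _) (hcontφ c₂ _ hd)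
          intro x hx
          rw [interior_Icc] at hx
          have hxd : |x - pstar| < δ := hsub x ⟨le_of_lt hx.1, le_of_lt hx.2⟩
          rw [(hφd c₂ x (hballd x hxd)).deriv]
          have := (hslopeNeg x hxd hx.2).1
          linarith
        have hlt' := hmono (Set.left_mem_Icc.mpr (le_of_lt hlt))
          (Set.right_mem_Icc.mpr (le_of_lt hlt)) hlt
        have e1 : c₂/2 * ((pstar:ℝ) - pstar)^2 = 0 := by ring
        have e2 : -c₂/2 * (pstar - p)^2 = -(c₂/2 * (p - pstar)^2) := by ring
        simp only at hlt'
        linarith [hlt', e1, e2]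
      · -- upper: φ (with c₁) strictly anti on [p, pstar]
        have hanti : StrictAntiOn (fun y => f y - c₁/2 * (y - pstar)^2) (Set.Icc p pstar) := by
          apply strictAntiOn_of_deriv_neg (convex_Icc _ _) (hcontφ c₁ _ hd)
          intro x hx
          rw [interior_Icc] at hx
          have hxd : |x - pstar| < δ := hsub x ⟨le_of_lt hx.1, le_of_lt hx.2⟩
          rw [(hφd c₁ x (hballd x hxd)).deriv]
          have := (hslopeNeg x hxd hx.2).2
          linarith
        have hlt' := hanti (Set.left_mem_Icc.mpr (le_of_lt hlt))
          (Set.right_mem_Icc.mpr (le_of_lt hlt)) hlt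
        have e1 : c₁/2 * ((pstar:ℝ) - pstar)^2 = 0 := by ring
        have e2 : -c₁/2 * (pstar - p)^2 = -(c₁/2 * (p - pstar)^2) := by ring
        simp only at hlt'
        linarith [hlt', e1, e2]
    · -- pstar < p : work on [pstar, p]
      have hsub : ∀ x ∈ Set.Icc pstar p, |x - pstar| < δ := by
        intro x hx
        rw [abs_lt]
        exact ⟨by linarith [hx.1, hδ], by linarith [hx.2, habs.2]⟩
      have hd : ∀ x ∈ Set.Icc pstar p, DifferentiableAt ℝ f x := fun x hx => hballd x (hsub x hx)
      constructor
      · -- lower: ψ (with c₂) strictly anti on [pstar, p]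
        have hanti : StrictAntiOn (fun y => f y - c₂/2 * (y - pstar)^2) (Set.Icc pstar p) := by
          apply strictAntiOn_of_deriv_neg (convex_Icc _ _) (hcontφ c₂ _ hd)
          intro x hx
          rw [interior_Icc] at hx
          have hxd : |x - pstar| < δ := hsub x ⟨le_of_lt hx.1, le_of_lt hx.2⟩
          rw [(hφd c₂ x (hballd x hxd)).deriv]
          have := (hslopePos x hxd hx.1).2
          linarith
        have hlt' := hanti (Set.left_mem_Icc.mpr (le_of_lt hgt))
          (Set.right_mem_Icc.mpr (le_of_lt hgt)) hgt
        have e1 : c₂/2 * ((pstar:ℝ) - pstar)^2 = 0 := by ring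
        have e2 : -c₂/2 * (pstar - p)^2 = -(c₂/2 * (p - pstar)^2) := by ring
        simp only at hlt'
        linarith [hlt', e1, e2]
      · -- upper: φ (with c₁) strictly mono on [pstar, p]
        have hmono : StrictMonoOn (fun y => f y - c₁/2 * (y - pstar)^2) (Set.Icc pstar p) := by
          apply strictMonoOn_of_deriv_pos (convex_Icc _ _) (hcontφ c₁ _ hd)
          intro x hx
          rw [interior_Icc] at hx
          have hxd : |x - pstar| < δ := hsub x ⟨le_of_lt hx.1, le_of_lt hx.2⟩
          rw [(hφd c₁ x (hballd x hxd)).deriv]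
          have := (hslopePos x hxd hx.1).1
          linarith
        have hlt' := hmono (Set.left_mem_Icc.mpr (le_of_lt hgt))
          (Set.right_mem_Icc.mpr (le_of_lt hgt)) hgt
        have e1 : c₁/2 * ((pstar:ℝ) - pstar)^2 = 0 := by ring
        have e2 : -c₁/2 * (pstar - p)^2 = -(c₁/2 * (p - pstar)^2) := by ring
        simp only at hlt'
        linarith [hlt', e1, e2]
  have hM2' : (0:ℝ) < -c₂/2 := by linarith
  have hM3' : (0:ℝ) < -c₁/2 := by linarith [hc₁lt]
  -- global min of f on [0,1]
  obtain ⟨p₁, hp₁mem, hp₁min⟩ :=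
    isCompact_Icc.exists_isMinOn ⟨0, Set.left_mem_Icc.mpr zero_le_one⟩ hcont
  set C : ℝ := f pstar - f p₁ with hC
  have hC0 : 0 ≤ C := by
    have := isMinOn_iff.mp hp₁min pstar hpstar
    rw [hC]; linarith
  have hCle : ∀ p ∈ Set.Icc (0:ℝ) 1, f pstar - f p ≤ C := by
    intro p hp
    have := isMinOn_iff.mp hp₁min p hp
    rw [hC]; linarith
  set M3 : ℝ := -c₁/2 + C/δ^2 with hM3
  have hM3pos : 0 < M3 := by
    have : 0 ≤ C/δ^2 := div_nonneg hC0 (by positivity)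
    rw [hM3]; linarith
  have hsq1 : ∀ p ∈ Set.Icc (0:ℝ) 1, (pstar - p)^2 ≤ 1 := by
    intro p hp
    nlinarith [hp.1, hp.2, hpstar.1, hpstar.2]
  have hupper : ∀ p ∈ Set.Icc (0:ℝ) 1, f pstar - f p ≤ M3 * (pstar - p)^2 := by
    intro p hp
    have e : M3 * (pstar - p)^2 = -c₁/2 * (pstar - p)^2 + C/δ^2 * (pstar - p)^2 := by
      rw [hM3]; ring
    by_cases hpd : |p - pstar| < δ
    · have h := (hnear p hpd).2
      have h2 : 0 ≤ C/δ^2 * (pstar - p)^2 := by positivity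
      rw [e]; linarith
    · push_neg at hpd
      have hsq : δ^2 ≤ (pstar - p)^2 := by
        have h' : δ ≤ |pstar - p| := by rwa [abs_sub_comm] at hpd
        nlinarith [abs_nonneg (pstar - p), sq_abs (pstar - p), hδ]
      have h1 := hCle p hp
      have h2 : C ≤ C/δ^2 * (pstar - p)^2 := by
        rw [div_mul_eq_mul_div, le_div_iff₀ (by positivity)]
        exact mul_le_mul_of_nonneg_left hsq hC0
      have h3 : 0 ≤ -c₁/2 * (pstar - p)^2 :=
        mul_nonneg (le_of_lt hM3') (sq_nonneg _)
      rw [e]; linarith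
  -- lower bound
  by_cases hfar : ∃ p ∈ Set.Icc (0:ℝ) 1, δ ≤ |p - pstar|
  · set K : Set ℝ := {p ∈ Set.Icc (0:ℝ) 1 | δ ≤ |p - pstar|} with hK
    have hKc : IsCompact K := by
      apply isCompact_Icc.inter_right
      exact isClosed_le continuous_const (continuous_id.sub continuous_const).abs
    have hKne : K.Nonempty := by
      obtain ⟨p, hp1, hp2⟩ := hfar
      exact ⟨p, hp1, hp2⟩
    obtain ⟨p₀, hp₀mem, hp₀max⟩ := hKc.exists_isMaxOn hKne (hcont.mono (fun x hx => hx.1))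
    have hp₀ne : p₀ ≠ pstar := by
      intro h
      have h2 := hp₀mem.2
      rw [h, sub_self, abs_zero] at h2
      linarith
    have hm : 0 < f pstar - f p₀ := by linarith [hmax p₀ hp₀mem.1 hp₀ne]
    set m : ℝ := f pstar - f p₀ with hmdef
    set M2 : ℝ := min (-c₂/2) m with hM2
    have hM2pos : 0 < M2 := lt_min hM2' hm
    refine ⟨M2, M3, hM2pos, hM3pos, fun p hp => ⟨?_, hupper p hp⟩⟩
    have hsqn : (0:ℝ) ≤ (pstar - p)^2 := sq_nonneg _
    by_cases hpd : |p - pstar| < δ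
    · have h := (hnear p hpd).1
      have t1 : M2 * (pstar - p)^2 ≤ -c₂/2 * (pstar - p)^2 :=
        mul_le_mul_of_nonneg_right (min_le_left _ _) hsqn
      linarith
    · push_neg at hpd
      have hpK : p ∈ K := ⟨hp, hpd⟩
      have h1 : f p ≤ f p₀ := isMaxOn_iff.mp hp₀max p hpK
      have t1 : M2 * (pstar - p)^2 ≤ m * (pstar - p)^2 :=
        mul_le_mul_of_nonneg_right (min_le_right _ _) hsqn
      have t2 : m * (pstar - p)^2 ≤ m * 1 :=
        mul_le_mul_of_nonneg_left (hsq1 p hp) (le_of_lt hm)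
      have : m ≤ f pstar - f p := by rw [hmdef]; linarith
      linarith
  · push_neg at hfar
    refine ⟨-c₂/2, M3, hM2', hM3pos, fun p hp => ⟨?_, hupper p hp⟩⟩
    exact (hnear p (hfar p hp)).1
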